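/- Let α, β > 0, 1 ≤ i ≤ n, τ ≥ 0 with iβτ + iβ − τ > 0, and let f^{(i)}_{α,β} be the density of the i-th order statistic of a sample of size n from the log-logistic distribution with parameters α, β. Then ξ^{(i)}_τ(α) := ∫₀^∞ (∂ log f^{(i)}_{α,β}(x)/∂α) · f^{(i)}_{α,β}(x)^{τ+1} dx = (β/α)^{τ+1} c(i,n)^{τ+1} · B( ((n−i+1)βτ + (n−i+1)β + τ)/β , (iβτ + iβ − τ)/β ) · (−τ/(β + τβ)). -/

import Mathlib

open MeasureTheory Set

/-- The Beta function `B(a,b) = ∫₀¹ x^(a-1) (1-x)^(b-1) dx`. -/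
noncomputable def Beta (a b : ℝ) : ℝ := ∫ x in Ioo (0:ℝ) 1, x ^ (a-1) * (1-x) ^ (b-1)

/-- `c(i,n) = n! / ((n-i)! (i-1)!)`. -/
noncomputable def cCoef (i n : ℕ) : ℝ :=
  (Nat.factorial n : ℝ) / ((Nat.factorial (n - i) : ℝ) * (Nat.factorial (i - 1) : ℝ))

/-- The density of the `i`-th order statistic of a log-logistic sample of size `n`. -/
noncomputable def fOrd (α β : ℝ) (n i : ℕ) (y : ℝ) : ℝ :=
  cCoef i n * β * (y/α) ^ ((i : ℝ) * β - 1) / (α * (1 + (y/α) ^ β) ^ (n + 1))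

/-- The score of the `i`-th order statistic density with respect to `α`. -/
noncomputable def scoreAlpha (α β : ℝ) (n i : ℕ) (x : ℝ) : ℝ :=
  β * ((n : ℝ) - i + 1) / α - ((n : ℝ) + 1) * β * α ^ (β - 1) / (α ^ β + x ^ β)

lemma Beta_eq_Gamma {a b : ℝ} (ha : 0 < a) (hb : 0 < b) :
    Beta a b = Real.Gamma a * Real.Gamma b / Real.Gamma (a+b) := by
  have h1 : (Beta a b : ℂ) = Complex.betaIntegral a b := by
    rw [Complex.betaIntegral, Beta, ← integral_Ioc_eq_integral_Ioo,
      ← intervalIntegral.integral_of_le zero_le_one, ← intervalIntegral.integral_ofReal]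
    apply intervalIntegral.integral_congr
    intro x hx
    rw [uIcc_of_le zero_le_one] at hx
    simp only []
    rw [Complex.ofReal_mul, Complex.ofReal_cpow hx.1, Complex.ofReal_cpow (by linarith [hx.2] : (0:ℝ) ≤ 1 - x)]
    push_cast
    ring
  have h2 := Complex.Gamma_mul_Gamma_eq_betaIntegral
    (s := (a:ℂ)) (t := (b:ℂ)) (by simpa using ha) (by simpa using hb)
  rw [← h1, ← Complex.ofReal_add, Complex.Gamma_ofReal, Complex.Gamma_ofReal,
    Complex.Gamma_ofReal, ← Complex.ofReal_mul, ← Complex.ofReal_mul] at h2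
  have h3 := Complex.ofReal_inj.mp h2
  have h4 : Real.Gamma (a+b) ≠ 0 := (Real.Gamma_pos_of_pos (by linarith)).ne'
  field_simp
  linarith [h3]

lemma betaIntegrable {a b : ℝ} (ha : 0 < a) (hb : 0 < b) :
    IntegrableOn (fun x : ℝ => x ^ (a-1) * (1-x) ^ (b-1)) (Ioo 0 1) := by
  have h := Complex.betaIntegral_convergent (u := a) (v := b) (by simpa using ha) (by simpa using hb)
  rw [intervalIntegrable_iff_integrableOn_Ioo_of_le zero_le_one] at h
  apply h.re.congr
  rw [Filter.EventuallyEq, ae_restrict_iff' measurableSet_Ioo]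
  filter_upwards with x hx
  have e1 := Complex.ofReal_cpow hx.1.le (a-1)
  have e2 := Complex.ofReal_cpow (by linarith [hx.2] : (0:ℝ) ≤ 1 - x) (b-1)
  push_cast at e1 e2
  rw [← e1, ← e2, ← Complex.ofReal_mul]
  simp





lemma scoreEq (α β : ℝ) (hα : 0 < α) (hβ : 0 < β) (n i : ℕ)
    (u : ℝ) (hu0 : 0 < u) (hu1 : u < 1) :
    scoreAlpha α β n i (α * (u/(1-u)) ^ (1/β)) = (β/α) * (((n:ℝ)+1)*u - i) := by
  have hv : 0 < 1 - u := by linarith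
  have ht : 0 < u / (1-u) := div_pos hu0 hv
  have hxb : (α * (u/(1-u)) ^ (1/β)) ^ β = α ^ β * (u/(1-u)) := by
    rw [Real.mul_rpow hα.le (Real.rpow_nonneg ht.le _), ← Real.rpow_mul ht.le,
      one_div_mul_cancel hβ.ne', Real.rpow_one]
  have hαβ : (0:ℝ) < α ^ β := Real.rpow_pos_of_pos hα β
  rw [scoreAlpha, hxb, Real.rpow_sub hα, Real.rpow_one]
  rw [show α ^ β + α ^ β * (u/(1-u)) = α ^ β * ((1-u+u)/(1-u)) by field_simp]
  rw [show (1-u+u)/(1-u) = (1-u)⁻¹ by field_simp; ring]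
  field_simp
  ring

lemma gDeriv (α β : ℝ) (hα : 0 < α) (hβ : 0 < β) (u : ℝ) (hu0 : 0 < u) (hu1 : u < 1) :
    HasDerivAt (fun w : ℝ => α * (w/(1-w)) ^ (1/β))
      (α * ((1/β) * (u/(1-u)) ^ (1/β - 1) * ((1-u)^2)⁻¹)) u := by
  have hv : 0 < 1 - u := by linarith
  have h1 : HasDerivAt (fun w : ℝ => w/(1-w)) (((1-u)^2)⁻¹) u := by
    have := (hasDerivAt_id u).div ((hasDerivAt_id u).const_sub 1) hv.ne'
    exact this.congr_deriv (by simp only [id]; ring)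
  have h2 : HasDerivAt (fun s : ℝ => s ^ (1/β)) ((1/β) * (u/(1-u)) ^ (1/β - 1)) (u/(1-u)) :=
    Real.hasDerivAt_rpow_const (Or.inl (div_pos hu0 hv).ne')
  have := (h2.comp u h1).const_mul α
  exact this

lemma gMono (α β : ℝ) (hα : 0 < α) (hβ : 0 < β) :
    StrictMonoOn (fun w : ℝ => α * (w/(1-w)) ^ (1/β)) (Ioo 0 1) := by
  intro w hw z hz hwz
  have h1 : w/(1-w) < z/(1-z) := by
    rw [div_lt_div_iff₀ (by linarith [hw.2]) (by linarith [hz.2])]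
    nlinarith [hw.1, hz.2]
  have := Real.rpow_lt_rpow (z := 1/β) (le_of_lt (div_pos hw.1 (by linarith [hw.2]))) h1 (by positivity)
  exact mul_lt_mul_of_pos_left this hα

lemma gImg (α β : ℝ) (hα : 0 < α) (hβ : 0 < β) :
    (fun w : ℝ => α * (w/(1-w)) ^ (1/β)) '' Ioo 0 1 = Ioi 0 := by
  ext y
  constructor
  · rintro ⟨u, ⟨hu0, hu1⟩, rfl⟩
    exact mul_pos hα (Real.rpow_pos_of_pos (div_pos hu0 (by linarith)) _)
  · intro hy
    have hy0 : 0 < y := hy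
    set t : ℝ := (y/α) ^ β with ht_def
    have ht : 0 < t := Real.rpow_pos_of_pos (div_pos hy0 hα) β
    refine ⟨t/(1+t), ⟨div_pos ht (by linarith), by rw [div_lt_one (by linarith)]; linarith⟩, ?_⟩
    have h1 : 1 - t/(1+t) = 1/(1+t) := by field_simp; ring
    have h2 : t/(1+t)/(1 - t/(1+t)) = t := by rw [h1]; field_simp
    show α * (t/(1+t)/(1 - t/(1+t))) ^ (1/β) = y
    rw [h2, ht_def, ← Real.rpow_mul (div_pos hy0 hα).le, mul_one_div_cancel hβ.ne',
      Real.rpow_one]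
    field_simp
-- key pointwise computation
lemma keyPt (α β τ : ℝ) (hα : 0 < α) (hβ : 0 < β) (n i : ℕ)
    (u : ℝ) (hu0 : 0 < u) (hu1 : u < 1) :
    α * ((1/β) * (u/(1-u)) ^ (1/β - 1) * (((1-u))^2)⁻¹) *
      ((β/α) * fOrd α β n i (α * (u/(1-u)) ^ (1/β)) ^ (τ+1))
    = (β/α)^(τ+1) * cCoef i n ^ (τ+1) *
      (u ^ (((i : ℝ) * β * τ + i * β - τ)/β - 1) * (1-u) ^ ((((n : ℝ) - i + 1) * β * τ + ((n : ℝ) - i + 1) * β + τ) / β - 1)) := by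
  have hv : 0 < 1 - u := by linarith
  set v : ℝ := 1 - u with hv_def
  set t : ℝ := u / v with ht_def
  have ht : 0 < t := div_pos hu0 hv
  have hc : 0 < cCoef i n := by
    apply div_pos (Nat.cast_pos.mpr (Nat.factorial_pos _))
    positivity
  set p : ℝ := (1/β) * ((i:ℝ)*β - 1) with hp_def
  set x : ℝ := α * t ^ (1/β) with hx_def
  have hxα : x / α = t ^ (1/β) := by
    field_simp [hx_def]
    exact hx_def
  have hxβ : (x/α) ^ β = t := by
    rw [hxα, ← Real.rpow_mul ht.le, one_div_mul_cancel hβ.ne', Real.rpow_one]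
  have hxp : (x/α) ^ ((i:ℝ)*β - 1) = t ^ p := by
    rw [hxα, ← Real.rpow_mul ht.le, hp_def]
  have h1t : 1 + t = v⁻¹ := by
    rw [ht_def]
    field_simp
    rw [hv_def]
    ring
  have hT : ∀ q : ℝ, t ^ q = u ^ q * v ^ (-q) := fun q => by
    rw [ht_def, Real.div_rpow hu0.le hv.le, Real.rpow_neg hv.le, div_eq_mul_inv]
  have hnp : (v⁻¹ : ℝ) ^ (n+1) = v ^ (-((n:ℝ)+1)) := by
    rw [inv_pow, ← Real.rpow_natCast v (n+1), ← Real.rpow_neg hv.le]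
    push_cast
    ring_nf
  have hf : fOrd α β n i x = (cCoef i n * β / α) * (u ^ p * v ^ ((n:ℝ) + 1 - p)) := by
    rw [fOrd, hxβ, hxp, h1t, hnp, hT p, Real.rpow_sub hv]
    rw [Real.rpow_neg hv.le ((n:ℝ)+1), Real.rpow_neg hv.le p]
    have h1 : (0:ℝ) < v ^ ((n:ℝ)+1) := Real.rpow_pos_of_pos hv _
    have h2 : (0:ℝ) < v ^ p := Real.rpow_pos_of_pos hv _
    field_simp
  have hfpos : 0 < (cCoef i n * β / α) * (u ^ p * v ^ ((n:ℝ) + 1 - p)) := by positivity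
  rw [hf]
  have hpow : ((cCoef i n * β / α) * (u ^ p * v ^ ((n:ℝ) + 1 - p))) ^ (τ+1)
      = (cCoef i n * β / α) ^ (τ+1) * (u ^ (p*(τ+1)) * v ^ (((n:ℝ) + 1 - p)*(τ+1))) := by
    rw [Real.mul_rpow (by positivity) (by positivity),
      Real.mul_rpow (by positivity) (by positivity),
      ← Real.rpow_mul hu0.le, ← Real.rpow_mul hv.le]
  rw [hpow, hT (1/β - 1)]
  have hsq : ((v:ℝ)^2)⁻¹ = v ^ (-2 : ℝ) := by
    rw [← Real.rpow_natCast v 2, ← Real.rpow_neg hv.le]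
    norm_num
  rw [hsq]
  -- now everything is rpow of u and v; collect exponents
  have e1 : u ^ (1/β - 1) * u ^ (p*(τ+1)) = u ^ (((i : ℝ) * β * τ + i * β - τ)/β - 1) := by
    rw [← Real.rpow_add hu0]
    congr 1
    rw [hp_def]
    field_simp
    ring
  have e2 : v ^ (-(1/β - 1)) * v ^ (-2 : ℝ) * v ^ (((n:ℝ) + 1 - p)*(τ+1))
      = v ^ ((((n : ℝ) - i + 1) * β * τ + ((n : ℝ) - i + 1) * β + τ) / β - 1) := by
    rw [← Real.rpow_add hv, ← Real.rpow_add hv]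
    congr 1
    rw [hp_def]
    field_simp
    ring
  have e3 : (cCoef i n * β / α) ^ (τ+1) = cCoef i n ^ (τ+1) * (β/α) ^ (τ+1) := by
    rw [show cCoef i n * β / α = cCoef i n * (β/α) by ring,
      Real.mul_rpow hc.le (by positivity)]
  rw [e3, ← e1, ← e2]
  field_simp


set_option maxHeartbeats 1000000 in
theorem xi_tau_alpha (α β τ : ℝ) (hα : 0 < α) (hβ : 0 < β) (hτ : 0 ≤ τ)
    (n i : ℕ) (hi1 : 1 ≤ i) (hin : i ≤ n)
    (hpos : 0 < (i : ℝ) * β * τ + i * β - τ) :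
    (∫ x in Ioi (0:ℝ), scoreAlpha α β n i x * (fOrd α β n i x) ^ (τ + 1))
      = (β/α) ^ (τ + 1) * cCoef i n ^ (τ + 1) *
          Beta ((((n : ℝ) - i + 1) * β * τ + ((n : ℝ) - i + 1) * β + τ) / β)
               (((i : ℝ) * β * τ + i * β - τ) / β)
          * (-τ / (β + τ * β)) := by
  have hni : (1:ℝ) ≤ (n:ℝ) - i + 1 := by
    have : (i:ℝ) ≤ n := Nat.cast_le.mpr hin
    linarith
  have hi : (1:ℝ) ≤ (i:ℝ) := by exact_mod_cast hi1
  set a : ℝ := ((i:ℝ) * β * τ + i * β - τ) / β with ha_def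
  set b : ℝ := (((n:ℝ) - i + 1) * β * τ + ((n:ℝ) - i + 1) * β + τ) / β with hb_def
  have ha : 0 < a := div_pos hpos hβ
  have hb : 0 < b := div_pos (by nlinarith) hβ
  have hab : a + b = ((n:ℝ) + 1) * (τ + 1) := by
    rw [ha_def, hb_def]
    field_simp
    ring
  have haβ : a * β = (i:ℝ) * β * τ + i * β - τ := by
    rw [ha_def]; field_simp
  set g : ℝ → ℝ := fun w => α * (w/(1-w)) ^ (1/β) with hg_def
  set g' : ℝ → ℝ := fun w => α * ((1/β) * (w/(1-w)) ^ (1/β - 1) * ((1-w)^2)⁻¹) with hg'_def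
  have hderiv : ∀ u ∈ Ioo (0:ℝ) 1, HasDerivWithinAt g (g' u) (Ioo 0 1) u :=
    fun u hu => (gDeriv α β hα hβ u hu.1 hu.2).hasDerivWithinAt
  have hchg := integral_image_eq_integral_abs_deriv_smul measurableSet_Ioo hderiv
    ((gMono α β hα hβ).injOn)
    (fun x => scoreAlpha α β n i x * (fOrd α β n i x) ^ (τ + 1))
  rw [gImg α β hα hβ] at hchg
  rw [hchg]
  have hpt : EqOn
      (fun u => |g' u| • (scoreAlpha α β n i (g u) * fOrd α β n i (g u) ^ (τ + 1)))
      (fun u => (β/α) ^ (τ+1) * cCoef i n ^ (τ+1) *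
        (((n:ℝ)+1) * (u ^ ((a+1)-1) * (1-u) ^ (b-1)) - i * (u ^ (a-1) * (1-u) ^ (b-1))))
      (Ioo 0 1) := by
    intro u hu
    obtain ⟨hu0, hu1⟩ := hu
    have hv : 0 < 1 - u := by linarith
    have hkey := keyPt α β τ hα hβ n i u hu0 hu1
    have hscore := scoreEq α β hα hβ n i u hu0 hu1
    have hg'pos : 0 < g' u := by
      have := Real.rpow_pos_of_pos (div_pos hu0 hv) (1/β - 1)
      rw [hg'_def]
      positivity
    simp only [smul_eq_mul, abs_of_pos hg'pos]
    have hupow : u ^ ((a+1)-1) = u ^ (a-1) * u := by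
      rw [show (a+1)-1 = (a-1)+1 by ring, Real.rpow_add_one hu0.ne']
    rw [hg_def, hg'_def]
    simp only []
    rw [hscore, hupow]
    linear_combination (((n:ℝ)+1) * u - i) * hkey
  rw [setIntegral_congr_fun measurableSet_Ioo hpt]
  rw [integral_const_mul]
  have hI1 : IntegrableOn (fun u : ℝ => u ^ ((a+1)-1) * (1-u) ^ (b-1)) (Ioo 0 1) :=
    betaIntegrable (by linarith) hb
  have hI2 : IntegrableOn (fun u : ℝ => u ^ (a-1) * (1-u) ^ (b-1)) (Ioo 0 1) :=
    betaIntegrable ha hb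
  rw [integral_sub (hI1.const_mul _) (hI2.const_mul _), integral_const_mul, integral_const_mul]
  have hB1 : (∫ u in Ioo (0:ℝ) 1, u ^ ((a+1)-1) * (1-u) ^ (b-1)) = Beta (a+1) b := rfl
  have hB2 : (∫ u in Ioo (0:ℝ) 1, u ^ (a-1) * (1-u) ^ (b-1)) = Beta a b := rfl
  rw [hB1, hB2]
  have hGab : Real.Gamma (a+b) ≠ 0 := (Real.Gamma_pos_of_pos (by linarith)).ne'
  have hBrec : Beta (a+1) b = a/(a+b) * Beta a b := by
    rw [Beta_eq_Gamma (by linarith) hb, Beta_eq_Gamma ha hb,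
      Real.Gamma_add_one ha.ne', show a+1+b = (a+b)+1 by ring,
      Real.Gamma_add_one (by positivity : a+b ≠ 0)]
    field_simp
  have hBsymm : Beta b a = Beta a b := by
    rw [Beta_eq_Gamma hb ha, Beta_eq_Gamma ha hb, show b+a = a+b by ring]
    ring
  have hscal : ((n:ℝ)+1) * (a/(a+b)) - i = -τ / (β + τ*β) := by
    have habne : a + b ≠ 0 := by positivity
    have hβτ : β + τ*β ≠ 0 := by positivity
    field_simp
    rw [hab]
    nlinarith [haβ]
  rw [hBrec, hBsymm]
  linear_combination ((β/α) ^ (τ+1) * cCoef i n ^ (τ+1) * Beta a b) * hscal
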